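/- Let n ≥ 2, let a_1, …, a_n be real numbers, let g(x) = x^{n−1} + c_1 x^{n−2} + ⋯ + c_{n−1} be a real polynomial (with the conventions c_0 = 1 and c_i = 0 for i < 0 or i > n−1), and set ρ = c_1 + (a_1 + ⋯ + a_n). Let A be the n×n real matrix with diagonal (a_1,…,a_n), superdiagonal entries 1, last row (b_n, …, b_2, a_n), and zeros elsewhere. Then A has characteristic polynomial (x − ρ)·g(x) if and only if, for each j = 2, …, n, b_j = ∑_{i=0}^{j} K_{i,j}, where K_{i,j} = h_i(a_1,…,a_{n−j+1})·(c_1 c_{j−i−1} − c_{j−i}) + (a_1 + ⋯ + a_n)·h_{i−1}(a_1,…,a_{n−j+1})·c_{j−i}, and h_i denotes the i-th complete homogeneous symmetric function (with h_0 = 1 and h_i = 0 for i < 0). -/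

import Mathlib

open Polynomial

/-- The `n × n` matrix (indices `0, …, n-1` corresponding to `1, …, n`) with diagonal
`a 0, …, a (n-1)`, superdiagonal entries `1`, last row below the diagonal
`b n, b (n-1), …, b 2`, and zeros elsewhere. -/
def companionPlusDiag (n : ℕ) (a b : ℕ → ℝ) : Matrix (Fin n) (Fin n) ℝ :=
  fun i j =>
    if (i : ℕ) = (j : ℕ) then a (i : ℕ)
    else if (i : ℕ) + 1 = (j : ℕ) then 1
    else if (i : ℕ) = n - 1 then b (n - (j : ℕ))
    else 0

/-- The `i`-th complete homogeneous symmetric function of the first `j` variables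
`a 0, …, a (j-1)`, with `h_i = 0` for `i < 0` (the index `i` ranges over `ℤ`). -/
noncomputable def hsymmTruncZ (a : ℕ → ℝ) (j : ℕ) (i : ℤ) : ℝ :=
  if 0 ≤ i then
    ∑ d ∈ Finset.Nat.antidiagonalTuple j i.toNat, ∏ k : Fin j, a (k : ℕ) ^ d k
  else 0

/-- The quantity `K_{i,j} = h_i(a_1,…,a_{n−j+1})·(c_1 c_{j−i−1} − c_{j−i})
 + (a_1 + ⋯ + a_n)·h_{i−1}(a_1,…,a_{n−j+1})·c_{j−i}`. -/
noncomputable def Kcoef (n : ℕ) (a : ℕ → ℝ) (c : ℤ → ℝ) (i j : ℕ) : ℝ :=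
  hsymmTruncZ a (n - j + 1) (i : ℤ) * (c 1 * c ((j : ℤ) - i - 1) - c ((j : ℤ) - i)) +
    (∑ r ∈ Finset.range n, a r) * hsymmTruncZ a (n - j + 1) ((i : ℤ) - 1) * c ((j : ℤ) - i)

lemma hZ_neg (a : ℕ → ℝ) (k : ℕ) (i : ℤ) (h : i < 0) : hsymmTruncZ a k i = 0 := by
  simp [hsymmTruncZ, not_le.mpr h]

lemma hZ_nat (a : ℕ → ℝ) (k : ℕ) (N : ℕ) :
    hsymmTruncZ a k (N : ℤ) =
      ∑ d ∈ Finset.Nat.antidiagonalTuple k N, ∏ i : Fin k, a (i : ℕ) ^ d i := by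
  simp [hsymmTruncZ]

lemma hZ_zero (a : ℕ → ℝ) (k : ℕ) : hsymmTruncZ a k 0 = 1 := by
  have := hZ_nat a k 0
  simpa [Finset.Nat.antidiagonalTuple_zero_right] using this

lemma hZ_one_var (a : ℕ → ℝ) (N : ℕ) : hsymmTruncZ a 1 (N : ℤ) = a 0 ^ N := by
  rw [hZ_nat, Finset.Nat.antidiagonalTuple_one]
  simp

lemma cons_sum (a : ℕ → ℝ) (k M : ℕ) :
    ∑ d ∈ Finset.Nat.antidiagonalTuple (k+1) M, ∏ i : Fin (k+1), a (i : ℕ) ^ d i =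
      ∑ p ∈ Finset.HasAntidiagonal.antidiagonal M, a 0 ^ p.1 *
        ∑ d ∈ Finset.Nat.antidiagonalTuple k p.2, ∏ i : Fin k, a ((i : ℕ)+1) ^ d i := by
  simp_rw [Finset.mul_sum]
  rw [Finset.sum_sigma']
  refine (Finset.sum_nbij' (fun x => Fin.cons x.1.1 x.2)
    (fun d => ⟨(d 0, ∑ i : Fin k, d i.succ), Fin.tail d⟩) ?_ ?_ ?_ ?_ ?_).symm
  · rintro ⟨⟨p1, p2⟩, d⟩ hx
    simp only [Finset.mem_sigma, Finset.HasAntidiagonal.mem_antidiagonal] at hx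
    rw [Finset.Nat.mem_antidiagonalTuple, Fin.sum_cons,
      Finset.Nat.mem_antidiagonalTuple.mp hx.2]
    exact hx.1
  · intro d hd
    rw [Finset.Nat.mem_antidiagonalTuple] at hd
    simp only [Finset.mem_sigma, Finset.HasAntidiagonal.mem_antidiagonal,
      Finset.Nat.mem_antidiagonalTuple]
    refine ⟨?_, rfl⟩
    rw [← hd, Fin.sum_univ_succ]
  · rintro ⟨⟨p1, p2⟩, d⟩ hx
    simp only [Finset.mem_sigma, Finset.HasAntidiagonal.mem_antidiagonal] at hx
    have h3 : ∑ i : Fin k, (Fin.cons p1 d : Fin (k+1) → ℕ) i.succ = p2 := by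
      simp only [Fin.cons_succ]
      exact Finset.Nat.mem_antidiagonalTuple.mp hx.2
    simp only [Fin.cons_zero, Fin.tail_cons, h3]
  · intro d hd
    simp only
    exact Fin.cons_self_tail d
  · rintro ⟨⟨p1, p2⟩, d⟩ hx
    simp [Fin.prod_univ_succ, Fin.cons_zero, Fin.cons_succ]

lemma hZ_rec (a : ℕ → ℝ) (k : ℕ) (i : ℤ) :
    hsymmTruncZ a (k+1) i =
      hsymmTruncZ (fun j => a (j+1)) k i + a 0 * hsymmTruncZ a (k+1) (i-1) := by
  rcases lt_trichotomy i 0 with h|h|h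
  · rw [hZ_neg _ _ _ h, hZ_neg _ _ _ h, hZ_neg _ _ _ (by omega), mul_zero, add_zero]
  · subst h
    rw [hZ_zero, hZ_zero, hZ_neg _ _ _ (by norm_num), mul_zero, add_zero]
  · obtain ⟨N, rfl⟩ : ∃ N : ℕ, i = (N:ℤ)+1 := ⟨(i-1).toNat, by omega⟩
    have e1 : ((N:ℤ)+1) = ((N+1 : ℕ) : ℤ) := by push_cast; ring
    have e2 : ((N:ℤ)+1-1) = (N:ℤ) := by ring
    rw [e2, e1, hZ_nat, hZ_nat, hZ_nat, cons_sum, cons_sum,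
      Finset.Nat.antidiagonal_succ, Finset.sum_cons, Finset.sum_map]
    simp only [pow_zero, one_mul, Function.Embedding.coe_prodMap,
      Function.Embedding.coeFn_mk, Function.Embedding.refl_apply, Prod.map_fst,
      Prod.map_snd, Finset.mul_sum]
    congr 1
    refine Finset.sum_congr rfl fun p _ => ?_
    rw [pow_succ]
    refine Finset.sum_congr rfl fun d _ => by ring

noncomputable def pya (a : ℕ → ℝ) (k : ℕ) : Polynomial ℝ :=
  ∏ i ∈ Finset.range k, (X - C (a i))

lemma pya_zero (a : ℕ → ℝ) : pya a 0 = 1 := by simp [pya]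

lemma pya_succ' (a : ℕ → ℝ) (k : ℕ) :
    pya a (k+1) = (X - C (a 0)) * pya (fun j => a (j+1)) k := by
  rw [pya, Finset.prod_range_succ', mul_comm]
  rfl

lemma pya_monic (a : ℕ → ℝ) (k : ℕ) : (pya a k).Monic :=
  monic_prod_of_monic _ _ fun i _ => monic_X_sub_C _

lemma pya_natDegree (a : ℕ → ℝ) (k : ℕ) : (pya a k).natDegree = k := by
  rw [pya, natDegree_prod_of_monic _ _ fun i _ => monic_X_sub_C _]
  simp

lemma expand : ∀ (N : ℕ) (a : ℕ → ℝ) (M : ℕ), N ≤ M →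
    (X : ℝ[X])^N =
      ∑ k ∈ Finset.range (M+1), C (hsymmTruncZ a (k+1) ((N:ℤ)-k)) * pya a k := by
  intro N
  induction N with
  | zero =>
    intro a M _
    rw [pow_zero, Finset.sum_eq_single 0]
    · simp [hZ_zero, pya_zero]
    · intro k _ hk
      rw [show ((0:ℕ):ℤ) - (k:ℤ) = -(k:ℤ) by push_cast; ring,
        hZ_neg _ _ _ (by omega), map_zero, zero_mul]
    · intro h
      exact absurd (Finset.mem_range.mpr (by omega)) h
  | succ N ih =>
    intro a M hM
    obtain ⟨M, rfl⟩ : ∃ M', M = M' + 1 := ⟨M-1, by omega⟩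
    have hXN : (X:ℝ[X])^(N+1) = (X - C (a 0)) * X^N + C (a 0) * X^N := by ring
    rw [hXN]
    nth_rewrite 1 [ih (fun j => a (j+1)) M (by omega)]
    rw [ih a (M+1) (by omega), Finset.mul_sum, Finset.mul_sum]
    have hA : ∀ k : ℕ,
        (X - C (a 0)) * (C (hsymmTruncZ (fun j => a (j+1)) (k+1) ((N:ℤ)-k)) *
          pya (fun j => a (j+1)) k)
        = C (hsymmTruncZ (fun j => a (j+1)) (k+1) ((N:ℤ)-k)) * pya a (k+1) := by
      intro k; rw [pya_succ']; ring
    simp_rw [hA]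
    rw [Finset.sum_range_succ'
      (fun k => C (hsymmTruncZ a (k+1) (((N+1:ℕ):ℤ)-k)) * pya a k) (M+1),
      Finset.sum_range_succ'
      (fun k => C (a 0) * (C (hsymmTruncZ a (k+1) ((N:ℤ)-k)) * pya a k)) (M+1),
      ← add_assoc, ← Finset.sum_add_distrib]
    congr 1
    · refine Finset.sum_congr rfl fun k _ => ?_
      have hh := hZ_rec a (k+1) ((N:ℤ) - k)
      have e1 : ((N+1:ℕ):ℤ) - ((k+1:ℕ):ℤ) = (N:ℤ) - (k:ℤ) := by push_cast; ring
      have e2 : ((N:ℕ):ℤ) - ((k+1:ℕ):ℤ) = (N:ℤ) - (k:ℤ) - 1 := by push_cast; ring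
      rw [e1, e2, hh, map_add, map_mul]
      ring
    · simp only [Nat.cast_zero, sub_zero, pya_zero, mul_one]
      rw [hZ_one_var, hZ_one_var, pow_succ, map_mul]
      ring

lemma indep (a : ℕ → ℝ) : ∀ (s : ℕ) (d : ℕ → ℝ),
    (∑ m ∈ Finset.range s, C (d m) * pya a m = 0) → ∀ m < s, d m = 0 := by
  intro s
  induction s with
  | zero => intro d _ m hm; omega
  | succ s ih =>
    intro d h m hm
    have hsum := h
    rw [Finset.sum_range_succ] at hsum
    have hcoeff := congrArg (fun p : Polynomial ℝ => p.coeff s) hsum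
    simp only [Polynomial.coeff_add, Polynomial.coeff_zero] at hcoeff
    rw [Polynomial.finset_sum_coeff] at hcoeff
    have hz : ∀ x ∈ Finset.range s, (C (d x) * pya a x).coeff s = 0 := by
      intro x hx
      rw [Polynomial.coeff_C_mul, Polynomial.coeff_eq_zero_of_natDegree_lt, mul_zero]
      rw [pya_natDegree]; exact Finset.mem_range.mp hx
    rw [Finset.sum_eq_zero hz, zero_add, Polynomial.coeff_C_mul] at hcoeff
    have hmon : (pya a s).coeff s = 1 := by
      have := (pya_monic a s).coeff_natDegree
      rwa [pya_natDegree] at this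
    rw [hmon, mul_one] at hcoeff
    rcases Nat.lt_succ_iff_lt_or_eq.mp hm with h'|h'
    · apply ih d _ m h'
      rw [Finset.sum_range_succ, hcoeff] at h
      simpa using h
    · rw [h']; exact hcoeff

lemma hZ_one : ∀ (k : ℕ) (a : ℕ → ℝ), hsymmTruncZ a k 1 = ∑ r ∈ Finset.range k, a r := by
  intro k
  induction k with
  | zero =>
    intro a
    rw [show (1:ℤ) = ((1:ℕ):ℤ) by norm_num, hZ_nat]
    simp [Finset.Nat.antidiagonalTuple_zero_succ]
  | succ k ih =>
    intro a
    rw [hZ_rec, ih, show (1:ℤ)-1 = 0 by ring, hZ_zero, mul_one, Finset.sum_range_succ']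

lemma charpoly_formula : ∀ (n : ℕ) (a b : ℕ → ℝ), 1 ≤ n →
    (companionPlusDiag n a b).charpoly =
      pya a n - ∑ m ∈ Finset.Icc 2 n, C (b m) * pya a (n - m) := by
  intro n
  induction n with
  | zero => intro a b h; omega
  | succ n ih =>
    intro a b _
    rcases Nat.eq_zero_or_pos n with rfl|hn
    · rw [Matrix.charpoly, Matrix.det_fin_one, Matrix.charmatrix_apply_eq]
      have : Finset.Icc 2 1 = (∅ : Finset ℕ) := by decide
      simp [this, companionPlusDiag, pya]
    · rw [Matrix.charpoly, Matrix.det_succ_column_zero]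
      have hM0 : Matrix.charmatrix (companionPlusDiag (n+1) a b) 0 0 = X - C (a 0) := by
        rw [Matrix.charmatrix_apply_eq]
        simp [companionPlusDiag]
      have hMlast : Matrix.charmatrix (companionPlusDiag (n+1) a b) (Fin.last n) 0
          = - C (b (n+1)) := by
        rw [Matrix.charmatrix_apply_ne]
        · congr 1
          simp [companionPlusDiag, hn.ne']
        · intro hcon
          have := congrArg (fun x : Fin (n+1) => (x:ℕ)) hcon
          simp at this
          omega
      have hent : ∀ (i j : Fin n), companionPlusDiag (n+1) a b i.succ j.succ
          = companionPlusDiag n (fun t => a (t+1)) b i j := by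
        intro i j
        have hi : (i:ℕ) < n := i.isLt
        have hj : (j:ℕ) < n := j.isLt
        simp only [companionPlusDiag, Fin.val_succ]
        by_cases h1 : (i:ℕ) = (j:ℕ)
        · rw [if_pos (by omega), if_pos h1]
        · rw [if_neg (by omega), if_neg h1]
          by_cases h2 : (i:ℕ)+1 = (j:ℕ)
          · rw [if_pos (by omega), if_pos h2]
          · rw [if_neg (by omega), if_neg h2]
            by_cases h3 : (i:ℕ) = n-1
            · rw [if_pos (by omega), if_pos h3]
              congr 1
              omega
            · rw [if_neg (by omega), if_neg h3]
      have hsub0 : (Matrix.charmatrix (companionPlusDiag (n+1) a b)).submatrix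
            (Fin.succAbove 0) Fin.succ
          = Matrix.charmatrix (companionPlusDiag n (fun t => a (t+1)) b) := by
        ext i j
        rw [Matrix.submatrix_apply, Fin.succAbove_zero]
        by_cases hij : i = j
        · subst hij
          rw [Matrix.charmatrix_apply_eq, Matrix.charmatrix_apply_eq, hent]
        · have hne : (Fin.succ i) ≠ (Fin.succ j) := fun h => hij (Fin.succ_injective _ h)
          rw [Matrix.charmatrix_apply_ne _ _ _ hne, Matrix.charmatrix_apply_ne _ _ _ hij, hent]
      have hsublast : ((Matrix.charmatrix (companionPlusDiag (n+1) a b)).submatrix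
            (Fin.succAbove (Fin.last n)) Fin.succ).det = (-1 : Polynomial ℝ)^n := by
        have hcs : ∀ (i j : Fin n), (i:ℕ) ≤ (j:ℕ) → (i.castSucc : Fin (n+1)) ≠ j.succ := by
          intro i j hle hcon
          have h := congrArg (fun x : Fin (n+1) => (x:ℕ)) hcon
          simp only [Fin.coe_castSucc, Fin.val_succ] at h
          omega
        rw [Matrix.det_of_lowerTriangular]
        · have hdiag : ∀ i : Fin n,
              ((Matrix.charmatrix (companionPlusDiag (n+1) a b)).submatrix
                (Fin.succAbove (Fin.last n)) Fin.succ) i i = -1 := by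
            intro i
            rw [Matrix.submatrix_apply, Fin.succAbove_last,
              Matrix.charmatrix_apply_ne _ _ _ (hcs i i le_rfl)]
            have h1 : companionPlusDiag (n+1) a b i.castSucc i.succ = 1 := by
              simp only [companionPlusDiag, Fin.coe_castSucc, Fin.val_succ]
              rw [if_neg (by omega)]
              simp
            rw [h1, map_one]
          simp only [hdiag]
          simp
        · intro i j hij
          have hlt : (i:ℕ) < (j:ℕ) := hij
          rw [Matrix.submatrix_apply, Fin.succAbove_last,
            Matrix.charmatrix_apply_ne _ _ _ (hcs i j (le_of_lt hlt))]
          have hi : (i:ℕ) < n := i.isLt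
          have h0 : companionPlusDiag (n+1) a b i.castSucc j.succ = 0 := by
            simp only [companionPlusDiag, Fin.coe_castSucc, Fin.val_succ]
            rw [if_neg (by omega), if_neg (by omega), if_neg (by omega)]
          rw [h0, map_zero, neg_zero]
      rw [Finset.sum_eq_add (0 : Fin (n+1)) (Fin.last n)
        (by intro hcon
            have h := congrArg (fun x : Fin (n+1) => (x:ℕ)) hcon
            simp only [Fin.val_zero, Fin.val_last] at h
            omega)
        (by rintro c - ⟨hc0, hcl⟩
            have hv0 : (c:ℕ) ≠ 0 := fun h => hc0 (Fin.ext h)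
            have hvl : (c:ℕ) ≠ n := fun h => hcl (Fin.ext h)
            have hz : companionPlusDiag (n+1) a b c 0 = 0 := by
              simp [companionPlusDiag, hv0, hvl]
            rw [Matrix.charmatrix_apply_ne _ _ _ (fun h => hc0 h), hz, map_zero, neg_zero,
              mul_zero, zero_mul])
        (by simp) (by simp)]
      rw [hM0, hMlast, hsub0, hsublast]
      have hdet : (Matrix.charmatrix (companionPlusDiag n (fun t => a (t+1)) b)).det
          = (companionPlusDiag n (fun t => a (t+1)) b).charpoly := rfl
      rw [hdet, ih _ _ hn]
      have hS : (X - C (a 0)) * ∑ m ∈ Finset.Icc 2 n, C (b m) * pya (fun t => a (t+1)) (n-m)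
          = ∑ m ∈ Finset.Icc 2 n, C (b m) * pya a (n+1-m) := by
        rw [Finset.mul_sum]
        refine Finset.sum_congr rfl fun m hm => ?_
        have hm' := Finset.mem_Icc.mp hm
        have he : n + 1 - m = (n - m) + 1 := by omega
        rw [he, pya_succ']
        ring
      have hins : Finset.Icc 2 (n+1) = insert (n+1) (Finset.Icc 2 n) := by
        ext x
        simp only [Finset.mem_Icc, Finset.mem_insert]
        omega
      rw [hins, Finset.sum_insert (by simp), Nat.sub_self, pya_zero, mul_one]
      have hsgn : ((-1:Polynomial ℝ)^((Fin.last n : Fin (n+1)):ℕ) * (-C (b (n+1))) * (-1)^n)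
          = -C (b (n+1)) := by
        rw [Fin.val_last, mul_right_comm, ← mul_pow]
        norm_num
      rw [hsgn, pya_succ' a n, mul_sub]
      simp only [Fin.val_zero, pow_zero, one_mul]
      rw [hS]
      ring

lemma coeff_ident (n : ℕ) (a : ℕ → ℝ) (c : ℤ → ℝ) (hcneg : ∀ i : ℤ, i < 0 → c i = 0)
    (hctop : ∀ i : ℤ, (n : ℤ) - 1 < i → c i = 0) (m : ℕ) (hm2 : 2 ≤ m) (hmn : m ≤ n) :
    ∑ i ∈ Finset.range (m+1), Kcoef n a c i m
      = ∑ t ∈ Finset.range n,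
          ((c 1 + ∑ r ∈ Finset.range n, a r) * (c t * hsymmTruncZ a (n-m+1) ((m:ℤ)-1-t))
            - c t * hsymmTruncZ a (n-m+1) ((m:ℤ)-t)) := by
  set S := ∑ r ∈ Finset.range n, a r with hS
  set H := fun i : ℤ => hsymmTruncZ a (n-m+1) i with hH
  -- extend RHS to range (n+1)
  have hext : ∑ t ∈ Finset.range n,
        ((c 1 + S) * (c t * H ((m:ℤ)-1-t)) - c t * H ((m:ℤ)-t))
      = ∑ t ∈ Finset.range (n+1),
        ((c 1 + S) * (c t * H ((m:ℤ)-1-t)) - c t * H ((m:ℤ)-t)) := by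
    rw [Finset.sum_range_succ]
    have hzero : ((c 1 + S) * (c (n:ℤ) * H ((m:ℤ)-1-(n:ℤ))) - c (n:ℤ) * H ((m:ℤ)-(n:ℤ))) = 0 := by
      rcases eq_or_lt_of_le hmn with heq|hlt
      · rw [hctop (n:ℤ) (by omega)]
        ring
      · rw [hH]
        simp only
        rw [hZ_neg _ _ _ (by omega), hZ_neg _ _ _ (by omega)]
        ring
    rw [hzero, add_zero]
  -- truncate to range (m+1)
  have htrunc : ∑ t ∈ Finset.range (n+1),
        ((c 1 + S) * (c t * H ((m:ℤ)-1-t)) - c t * H ((m:ℤ)-t))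
      = ∑ t ∈ Finset.range (m+1),
        ((c 1 + S) * (c t * H ((m:ℤ)-1-t)) - c t * H ((m:ℤ)-t)) := by
    symm
    apply Finset.sum_subset
    · intro x hx
      simp only [Finset.mem_range] at hx ⊢
      omega
    · intro x hx hx'
      simp only [Finset.mem_range] at hx hx'
      rw [hH]
      simp only
      rw [hZ_neg _ _ _ (by omega), hZ_neg _ _ _ (by omega)]
      simp
  rw [hext, htrunc]
  -- reflect LHS
  have hrefl : ∑ i ∈ Finset.range (m+1), Kcoef n a c i m
      = ∑ t ∈ Finset.range (m+1),
        (c 1 * (c ((t:ℤ)-1) * H ((m:ℤ)-t)) + (S * (c t * H ((m:ℤ)-1-t)) - c t * H ((m:ℤ)-t))) := by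
    rw [← Finset.sum_range_reflect]
    refine Finset.sum_congr rfl fun t ht => ?_
    have ht' : t ≤ m := by
      simp only [Finset.mem_range] at ht; omega
    have e0 : m + 1 - 1 - t = m - t := by omega
    rw [e0]
    unfold Kcoef
    have e1 : ((m - t : ℕ) : ℤ) = (m:ℤ) - t := by omega
    have e2 : (m:ℤ) - ((m - t : ℕ) : ℤ) = (t:ℤ) := by omega
    rw [e2, e1, ← hS]
    simp only [hH]
    have e4 : (m:ℤ) - t - 1 = (m:ℤ) - 1 - t := by ring
    rw [e4]
    ring
  rw [hrefl]
  -- the shift identity for the c 1 part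
  have hshift : ∑ t ∈ Finset.range (m+1), c ((t:ℤ)-1) * H ((m:ℤ)-t)
      = ∑ t ∈ Finset.range (m+1), c t * H ((m:ℤ)-1-t) := by
    rw [Finset.sum_range_succ' (fun t => c ((t:ℤ)-1) * H ((m:ℤ)-t)) m,
      Finset.sum_range_succ (fun t => c (t:ℤ) * H ((m:ℤ)-1-t)) m]
    rw [show ((0:ℕ):ℤ) - 1 = (-1 : ℤ) by norm_num, hcneg (-1) (by norm_num), zero_mul, add_zero]
    rw [show (m:ℤ) - 1 - (m:ℤ) = (-1 : ℤ) by ring, hH]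
    simp only
    rw [hZ_neg _ _ _ (by norm_num), mul_zero, add_zero]
    refine Finset.sum_congr rfl fun t ht => ?_
    have e5 : ((t+1:ℕ):ℤ) - 1 = (t:ℤ) := by push_cast; ring
    have e6 : (m:ℤ) - ((t+1:ℕ):ℤ) = (m:ℤ) - 1 - t := by push_cast; ring
    rw [e5, e6]
  rw [Finset.sum_add_distrib, ← Finset.mul_sum, hshift]
  rw [Finset.mul_sum, ← Finset.sum_add_distrib]
  refine Finset.sum_congr rfl fun t ht => ?_
  ring

lemma gexp (n : ℕ) (hn : 2 ≤ n) (a : ℕ → ℝ) (c : ℤ → ℝ) (hc0 : c 0 = 1) :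
    (X - C (c 1 + ∑ r ∈ Finset.range n, a r)) *
      (X ^ (n-1) + ∑ i ∈ Finset.Icc 1 (n-1), C (c (i:ℤ)) * X ^ (n-1-i))
    = ∑ k ∈ Finset.range (n+1), C (∑ t ∈ Finset.range n,
        (c t * hsymmTruncZ a (k+1) ((n:ℤ)-t-k)
          - (c 1 + ∑ r ∈ Finset.range n, a r) * (c t * hsymmTruncZ a (k+1) ((n:ℤ)-1-t-k)))) *
        pya a k := by
  have hg : (X:ℝ[X]) ^ (n-1) + ∑ i ∈ Finset.Icc 1 (n-1), C (c (i:ℤ)) * X ^ (n-1-i)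
      = ∑ t ∈ Finset.range n, C (c (t:ℤ)) * X ^ (n-1-t) := by
    have hIcc : Finset.Icc 1 (n-1) = Finset.Ico 1 n := by
      rw [← Finset.Ico_add_one_right_eq_Icc]
      congr 1
      omega
    rw [Finset.sum_range_eq_add_Ico _ (by omega : 0 < n), hIcc]
    norm_num [hc0]
  rw [hg, Finset.mul_sum]
  have hterm : ∀ t ∈ Finset.range n,
      (X - C (c 1 + ∑ r ∈ Finset.range n, a r)) * (C (c (t:ℤ)) * X ^ (n-1-t))
      = ∑ k ∈ Finset.range (n+1),
          (C (c t * hsymmTruncZ a (k+1) ((n:ℤ)-t-k)) * pya a k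
            - C ((c 1 + ∑ r ∈ Finset.range n, a r) *
                (c t * hsymmTruncZ a (k+1) ((n:ℤ)-1-t-k))) * pya a k) := by
    intro t ht
    have htn : t < n := Finset.mem_range.mp ht
    have hpow : (X:ℝ[X]) * X ^ (n-1-t) = X ^ (n-t) := by
      rw [← pow_succ']
      congr 1
      omega
    have hx1 : (X:ℝ[X]) ^ (n-t) = ∑ k ∈ Finset.range (n+1),
        C (hsymmTruncZ a (k+1) ((n:ℤ)-t-k)) * pya a k := by
      rw [expand (n-t) a n (by omega)]
      refine Finset.sum_congr rfl fun k _ => ?_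
      have e : ((n-t:ℕ):ℤ) - (k:ℤ) = (n:ℤ)-t-k := by omega
      rw [e]
    have hx2 : (X:ℝ[X]) ^ (n-1-t) = ∑ k ∈ Finset.range (n+1),
        C (hsymmTruncZ a (k+1) ((n:ℤ)-1-t-k)) * pya a k := by
      rw [expand (n-1-t) a n (by omega)]
      refine Finset.sum_congr rfl fun k _ => ?_
      have e : ((n-1-t:ℕ):ℤ) - (k:ℤ) = (n:ℤ)-1-t-k := by omega
      rw [e]
    calc (X - C (c 1 + ∑ r ∈ Finset.range n, a r)) * (C (c (t:ℤ)) * X ^ (n-1-t))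
        = C (c (t:ℤ)) * ((X:ℝ[X]) * X ^ (n-1-t))
          - C (c 1 + ∑ r ∈ Finset.range n, a r) * (C (c (t:ℤ)) * X ^ (n-1-t)) := by ring
      _ = _ := by
          rw [hpow, hx1, hx2, Finset.mul_sum, Finset.mul_sum, Finset.mul_sum,
            ← Finset.sum_sub_distrib]
          refine Finset.sum_congr rfl fun k _ => ?_
          rw [map_mul, map_mul, map_mul]
          ring
  rw [Finset.sum_congr rfl hterm, Finset.sum_comm]
  refine Finset.sum_congr rfl fun k _ => ?_
  rw [map_sum, Finset.sum_mul]
  refine Finset.sum_congr rfl fun t _ => ?_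
  rw [map_sub]
  ring

lemma keyIdentity (n : ℕ) (hn : 2 ≤ n) (a : ℕ → ℝ) (c : ℤ → ℝ) (hc0 : c 0 = 1)
    (hcneg : ∀ i : ℤ, i < 0 → c i = 0) (hctop : ∀ i : ℤ, (n : ℤ) - 1 < i → c i = 0) :
    pya a n - (X - C (c 1 + ∑ r ∈ Finset.range n, a r)) *
        (X ^ (n-1) + ∑ i ∈ Finset.Icc 1 (n-1), C (c (i:ℤ)) * X ^ (n-1-i))
      = ∑ m ∈ Finset.Icc 2 n,
          C (∑ i ∈ Finset.range (m+1), Kcoef n a c i m) * pya a (n-m) := by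
  rw [gexp n hn a c hc0]
  set ρ := c 1 + ∑ r ∈ Finset.range n, a r with hρ
  set E := fun k : ℕ => ∑ t ∈ Finset.range n,
      (c t * hsymmTruncZ a (k+1) ((n:ℤ)-t-k)
        - ρ * (c t * hsymmTruncZ a (k+1) ((n:ℤ)-1-t-k))) with hE
  have hfold : ∀ k : ℕ, (∑ t ∈ Finset.range n,
      (c t * hsymmTruncZ a (k+1) ((n:ℤ)-t-k)
        - ρ * (c t * hsymmTruncZ a (k+1) ((n:ℤ)-1-t-k)))) = E k := fun k => rfl
  simp only [hfold]
  have hEn : E n = 1 := by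
    rw [hE]
    simp only
    rw [Finset.sum_eq_single 0]
    · rw [show (n:ℤ) - ((0:ℕ):ℤ) - (n:ℤ) = 0 by omega, hZ_zero,
        hZ_neg _ _ _ (by omega)]
      simp only [Nat.cast_zero]
      rw [hc0]
      ring
    · intro t ht htne
      have htn : t < n := Finset.mem_range.mp ht
      rw [hZ_neg _ _ _ (by omega), hZ_neg _ _ _ (by omega)]
      ring
    · intro h
      exact absurd (Finset.mem_range.mpr (by omega)) h
  have hEn1 : E (n-1) = 0 := by
    rw [hE]
    simp only
    rw [Finset.sum_eq_add 0 1 (by omega)]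
    · have e1 : (n:ℤ) - ((0:ℕ):ℤ) - ((n-1:ℕ):ℤ) = 1 := by omega
      have e2 : (n:ℤ) - 1 - ((0:ℕ):ℤ) - ((n-1:ℕ):ℤ) = 0 := by omega
      have e3 : (n:ℤ) - ((1:ℕ):ℤ) - ((n-1:ℕ):ℤ) = 0 := by omega
      have e4 : (n:ℤ) - 1 - ((1:ℕ):ℤ) - ((n-1:ℕ):ℤ) = -1 := by omega
      rw [e1, e2, e3, e4, hZ_zero, hZ_one, hZ_neg _ _ _ (by norm_num)]
      simp only [Nat.cast_zero, Nat.cast_one]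
      have e5 : n - 1 + 1 = n := by omega
      rw [hc0, e5, hρ]
      ring
    · rintro t ht ⟨h0, h1⟩
      have htn : t < n := Finset.mem_range.mp ht
      rw [hZ_neg _ _ _ (by omega), hZ_neg _ _ _ (by omega)]
      ring
    · intro h
      exact absurd (Finset.mem_range.mpr (by omega)) h
    · intro h
      exact absurd (Finset.mem_range.mpr (by omega)) h
  obtain ⟨n', rfl⟩ : ∃ n', n = n' + 2 := ⟨n - 2, by omega⟩
  rw [Finset.sum_range_succ, Finset.sum_range_succ]
  rw [show n' + 2 - 1 = n' + 1 from rfl] at hEn1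
  rw [hEn1, hEn, map_zero, zero_mul, add_zero, map_one, one_mul]
  have hsimp : pya a (n'+2) -
      (∑ k ∈ Finset.range (n'+1), C (E k) * pya a k + pya a (n'+2))
      = -∑ k ∈ Finset.range (n'+1), C (E k) * pya a k := by ring
  rw [hsimp, ← Finset.sum_neg_distrib]
  refine Finset.sum_nbij' (fun k => n'+2-k) (fun m => n'+2-m) ?_ ?_ ?_ ?_ ?_
  · intro k hk
    simp only [Finset.mem_range] at hk
    simp only [Finset.mem_Icc]
    omega
  · intro m hm
    simp only [Finset.mem_Icc] at hm
    simp only [Finset.mem_range]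
    omega
  · intro k hk
    simp only [Finset.mem_range] at hk
    omega
  · intro m hm
    simp only [Finset.mem_Icc] at hm
    omega
  · intro k hk
    have hk' : k < n' + 1 := Finset.mem_range.mp hk
    have epya : n'+2-(n'+2-k) = k := by omega
    rw [epya]
    rw [coeff_ident (n'+2) a c hcneg hctop (n'+2-k) (by omega) (by omega)]
    have hsum : ∑ t ∈ Finset.range (n'+2),
          ((c 1 + ∑ r ∈ Finset.range (n'+2), a r) *
              (c t * hsymmTruncZ a ((n'+2)-(n'+2-k)+1) (((n'+2-k:ℕ):ℤ)-1-t))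
            - c t * hsymmTruncZ a ((n'+2)-(n'+2-k)+1) (((n'+2-k:ℕ):ℤ)-t))
        = - E k := by
      rw [hE]
      simp only
      rw [← Finset.sum_neg_distrib]
      refine Finset.sum_congr rfl fun t ht => ?_
      have eK : (n'+2)-(n'+2-k)+1 = k+1 := by omega
      have eA1 : ((n'+2-k:ℕ):ℤ)-1-(t:ℤ) = ((n'+2:ℕ):ℤ)-1-t-k := by omega
      have eA2 : ((n'+2-k:ℕ):ℤ)-(t:ℤ) = ((n'+2:ℕ):ℤ)-t-k := by omega
      rw [eK, eA1, eA2, hρ]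
      ring
    rw [hsum, map_neg]
    ring

/-- The companion-plus-diagonal matrix has characteristic polynomial
`(x − ρ)·g(x)`, where `g(x) = x^{n−1} + c_1 x^{n−2} + ⋯ + c_{n−1}` and
`ρ = c_1 + (a_1 + ⋯ + a_n)`, if and only if `b_j = ∑_{i=0}^j K_{i,j}` for each
`j = 2, …, n`. -/
theorem charpoly_eq_iff_b_eq_sum_K (n : ℕ) (hn : 2 ≤ n) (a b : ℕ → ℝ) (c : ℤ → ℝ)
    (hc0 : c 0 = 1) (hcneg : ∀ i : ℤ, i < 0 → c i = 0)
    (hctop : ∀ i : ℤ, (n : ℤ) - 1 < i → c i = 0) :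
    (companionPlusDiag n a b).charpoly =
        (X - C (c 1 + ∑ r ∈ Finset.range n, a r)) *
          (X ^ (n - 1) + ∑ i ∈ Finset.Icc 1 (n - 1), C (c (i : ℤ)) * X ^ (n - 1 - i)) ↔
      ∀ j ∈ Finset.Icc 2 n, b j = ∑ i ∈ Finset.range (j + 1), Kcoef n a c i j := by
  rw [charpoly_formula n a b (by omega)]
  have hkey := keyIdentity n hn a c hc0 hcneg hctop
  have hG : (X - C (c 1 + ∑ r ∈ Finset.range n, a r)) *
      (X ^ (n-1) + ∑ i ∈ Finset.Icc 1 (n-1), C (c (i:ℤ)) * X ^ (n-1-i))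
      = pya a n - ∑ m ∈ Finset.Icc 2 n,
          C (∑ i ∈ Finset.range (m+1), Kcoef n a c i m) * pya a (n-m) := by
    rw [← hkey]
    ring
  rw [hG]
  constructor
  · intro h j hj
    obtain ⟨hj2, hjn⟩ := Finset.mem_Icc.mp hj
    have heq : ∑ m ∈ Finset.Icc 2 n, C (b m) * pya a (n-m)
        = ∑ m ∈ Finset.Icc 2 n,
            C (∑ i ∈ Finset.range (m+1), Kcoef n a c i m) * pya a (n-m) := by
      linear_combination -h
    have h2 : ∑ m ∈ Finset.Icc 2 n,
        C (b m - ∑ i ∈ Finset.range (m+1), Kcoef n a c i m) * pya a (n-m) = 0 := by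
      have : ∀ m ∈ Finset.Icc 2 n,
          C (b m - ∑ i ∈ Finset.range (m+1), Kcoef n a c i m) * pya a (n-m)
          = C (b m) * pya a (n-m)
            - C (∑ i ∈ Finset.range (m+1), Kcoef n a c i m) * pya a (n-m) := by
        intro m _
        rw [map_sub]
        ring
      rw [Finset.sum_congr rfl this, Finset.sum_sub_distrib, heq, sub_self]
    have h3 : ∑ k ∈ Finset.range (n-1),
        C (b (n-k) - ∑ i ∈ Finset.range ((n-k)+1), Kcoef n a c i (n-k)) * pya a k
        = ∑ m ∈ Finset.Icc 2 n,
            C (b m - ∑ i ∈ Finset.range (m+1), Kcoef n a c i m) * pya a (n-m) := by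
      refine Finset.sum_nbij' (fun k => n-k) (fun m => n-m) ?_ ?_ ?_ ?_ ?_
      · intro k hk
        simp only [Finset.mem_range] at hk
        simp only [Finset.mem_Icc]
        omega
      · intro m hm
        simp only [Finset.mem_Icc] at hm
        simp only [Finset.mem_range]
        omega
      · intro k hk
        simp only [Finset.mem_range] at hk
        omega
      · intro m hm
        simp only [Finset.mem_Icc] at hm
        omega
      · intro k hk
        simp only [Finset.mem_range] at hk
        have e : n - (n - k) = k := by omega
        rw [e]
    have hzero := indep a (n-1)
      (fun k => b (n-k) - ∑ i ∈ Finset.range ((n-k)+1), Kcoef n a c i (n-k))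
      (by rw [h3, h2]) (n-j) (by omega)
    have e : n - (n - j) = j := by omega
    rw [e] at hzero
    linarith [hzero]
  · intro h
    congr 1
    refine Finset.sum_congr rfl fun m hm => ?_
    rw [h m hm]
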